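/- (Data processing for sandwiched Rényi relative entropy of classical-quantum form, special case: pinching) For quantum states ρ, σ with supp(ρ) ⊆ supp(σ), and α ∈ (0,1], the quantity D_{1+α}(E_σ(ρ)‖σ) := (1/α) log Tr[ E_σ(ρ)^{1+α} σ^{−α} ] satisfies D_{1+α}(E_σ(ρ)‖σ) ≤ D_{1+α}(ρ‖σ), where D_{1+α}(ρ‖σ) is the sandwiched Rényi relative entropy. -/

import Mathlib

/-!
Data processing for the sandwiched Rényi relative entropy under pinching:
for quantum states ρ, σ with supp(ρ) ⊆ supp(σ) and α ∈ (0,1],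
  (1/α) log₂ Tr[E_σ(ρ)^{1+α} σ^{−α}] ≤ D_{1+α}(ρ‖σ),
where E_σ is the pinching map in the eigenbasis of σ (spectral decomposition
σ = Σ_i λ_i P_i with distinct λ_i and orthogonal projections P_i summing to I),
σ^{−α} is the pseudo-power on the support of σ, and
  D_{1+α}(ρ‖σ) = (1/α) log₂ Tr[(σ^{−α/(2(1+α))} ρ σ^{−α/(2(1+α))})^{1+α}]
is the sandwiched Rényi relative entropy of order 1+α.
-/

open Matrix
open scoped ComplexOrder

set_option linter.unusedSectionVars false

variable {n : Type*} [Fintype n] [DecidableEq n]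

lemma cfcHerm {A : Matrix n n ℂ} (hA : A.IsHermitian) (f : ℝ → ℝ) :
    (hA.cfc f).IsHermitian := by
  rw [← hA.cfc_eq f]
  exact cfc_predicate f A

lemma pinchHerm {v : ℕ} (P : Fin v → Matrix n n ℂ) (hP : ∀ i, (P i).IsHermitian)
    {ρ : Matrix n n ℂ} (hρ : ρ.IsHermitian) : (∑ i, P i * ρ * P i).IsHermitian := by
  unfold Matrix.IsHermitian
  rw [conjTranspose_sum]
  refine Finset.sum_congr rfl fun i _ => ?_
  simp [conjTranspose_mul, Matrix.mul_assoc, (hP i).eq, hρ.eq]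

/-- Pseudo-power `A^p` of a Hermitian matrix (on its support), via functional calculus. -/
noncomputable def mpow {A : Matrix n n ℂ} (hA : A.IsHermitian) (p : ℝ) : Matrix n n ℂ :=
  hA.cfc (fun t => if t = 0 then 0 else t ^ p)

lemma sandwichHerm {ρ σ : Matrix n n ℂ} (hρ : ρ.IsHermitian) (hσ : σ.IsHermitian)
    (p : ℝ) : (mpow hσ p * ρ * mpow hσ p).IsHermitian := by
  have h := cfcHerm hσ (fun t => if t = 0 then 0 else t ^ p)
  unfold Matrix.IsHermitian mpow
  simp [conjTranspose_mul, Matrix.mul_assoc, h.eq, hρ.eq]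

/-- The sandwiched Rényi relative entropy of order `1 + α` (base-2 logarithm),
`D_{1+α}(ρ‖σ) = (1/α) log₂ Tr[(σ^{−α/(2(1+α))} ρ σ^{−α/(2(1+α))})^{1+α}]`. -/
noncomputable def sandRenyi (α : ℝ) (ρ σ : Matrix n n ℂ)
    (hρ : ρ.IsHermitian) (hσ : σ.IsHermitian) : ℝ :=
  (1 / α) * Real.logb 2
    (((sandwichHerm hρ hσ (-(α / (2 * (1 + α))))).cfc
        (fun t => if t ≤ 0 then 0 else t ^ (1 + α))).trace.re)

set_option maxHeartbeats 1000000

/-! ### Auxiliary scalar functions -/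

noncomputable def fpow (α t : ℝ) : ℝ := if t ≤ 0 then 0 else t ^ (1 + α)
noncomputable def gpow (α t : ℝ) : ℝ := if t = 0 then 0 else t ^ (-(α / (2 * (1 + α))))
noncomputable def tpow (α t : ℝ) : ℝ := if t = 0 then 0 else t ^ (-α)

lemma fpow_nonneg (α t : ℝ) : 0 ≤ fpow α t := by
  unfold fpow
  split
  · exact le_refl _
  · exact Real.rpow_nonneg (le_of_not_ge (by assumption)) _

lemma fpow_pos {α : ℝ} {t : ℝ} (ht : 0 < t) : 0 < fpow α t := by
  unfold fpow
  rw [if_neg (not_le.mpr ht)]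
  exact Real.rpow_pos_of_pos ht _

lemma tpow_nonneg {α t : ℝ} (ht : 0 ≤ t) : 0 ≤ tpow α t := by
  unfold tpow
  split
  · exact le_refl _
  · exact Real.rpow_nonneg ht _

lemma fpow_of_nonneg {α t : ℝ} (hα0 : 0 < α) (ht : 0 ≤ t) : fpow α t = t ^ (1 + α) := by
  unfold fpow
  rcases eq_or_lt_of_le ht with h | h
  · rw [if_pos h.ge, ← h, Real.zero_rpow (by positivity)]
  · rw [if_neg (not_le.mpr h)]

lemma fp_scale {α l μ : ℝ} (hα0 : 0 < α) (hl : 0 ≤ l) (hμ : 0 ≤ μ) :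
    fpow α μ * tpow α l = fpow α ((gpow α l) ^ 2 * μ) := by
  unfold fpow gpow tpow
  by_cases hl0 : l = 0
  · simp [hl0]
  · have hlpos : 0 < l := lt_of_le_of_ne hl (Ne.symm hl0)
    set r : ℝ := -(α / (2 * (1 + α))) with hr
    have hcpos : 0 < l ^ r := Real.rpow_pos_of_pos hlpos r
    rw [if_neg hl0, if_neg hl0]
    rcases eq_or_lt_of_le hμ with hμ0 | hμ0
    · rw [← hμ0]
      simp
    · have hc2pos : 0 < (l ^ r) ^ 2 * μ := by positivity
      rw [if_neg (not_le.mpr hμ0), if_neg (not_le.mpr hc2pos)]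
      have h1 : (l ^ r) ^ 2 = l ^ (r + r) := by
        rw [Real.rpow_add hlpos, sq]
      rw [h1, Real.mul_rpow (Real.rpow_nonneg hl _) hμ, ← Real.rpow_mul hl]
      have h2 : (r + r) * (1 + α) = -α := by
        rw [hr]
        have h1α : (1:ℝ) + α ≠ 0 := by positivity
        field_simp
        ring
      rw [h2]
      ring

lemma jensen_fp {ι : Type*} [Fintype ι] {α : ℝ} (hα0 : 0 < α)
    (a lam : ι → ℝ) (ha : ∀ k, 0 ≤ a k) (hlam : ∀ k, 0 ≤ lam k) (c : ℝ) (hc0 : 0 ≤ c)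
    (hc : c * (∑ k, a k) = ∑ k, lam k * a k) :
    fpow α c * (∑ k, a k) ≤ ∑ k, fpow α (lam k) * a k := by
  have hrw : ∀ k : ι, fpow α (lam k) = lam k ^ (1+α) := fun k => fpow_of_nonneg hα0 (hlam k)
  simp only [fpow_of_nonneg hα0 hc0, hrw]
  have hS : 0 ≤ ∑ k, a k := Finset.sum_nonneg fun k _ => ha k
  rcases eq_or_lt_of_le hS with hS0 | hS0
  · have hall : ∀ k, a k = 0 := by
      intro k
      by_contra h
      have hpos : 0 < ∑ k, a k := Finset.sum_pos' (fun k _ => ha k)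
        ⟨k, Finset.mem_univ k, (ha k).lt_of_ne (Ne.symm h)⟩
      linarith
    simp [hall]
  · have hSne : (∑ k, a k) ≠ 0 := ne_of_gt hS0
    have hconv : ConvexOn ℝ (Set.Ici 0) (fun x : ℝ => x ^ (1+α)) :=
      convexOn_rpow (by linarith)
    have hsumw : ∑ k, a k / (∑ m, a m) = 1 := by
      rw [← Finset.sum_div, div_self hSne]
    have hceq : (∑ k, (a k / (∑ m, a m)) • lam k) = c := by
      have h0 : ∑ k, (a k / (∑ m, a m)) • lam k = (∑ k, lam k * a k) / (∑ m, a m) := by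
        rw [Finset.sum_div]
        refine Finset.sum_congr rfl fun k _ => ?_
        rw [smul_eq_mul]
        ring
      rw [h0, ← hc, mul_div_assoc, div_self hSne, mul_one]
    have hj := hconv.map_sum_le (t := Finset.univ) (w := fun k => a k / (∑ m, a m)) (p := lam)
      (fun k _ => div_nonneg (ha k) hS) hsumw (fun k _ => hlam k)
    rw [hceq] at hj
    have h2 := mul_le_mul_of_nonneg_right hj hS
    calc c ^ (1+α) * (∑ k, a k) ≤ (∑ k, (a k / (∑ m, a m)) • lam k ^ (1+α)) * (∑ k, a k) := h2
      _ = ∑ k, lam k ^ (1+α) * a k := by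
          rw [Finset.sum_mul]
          refine Finset.sum_congr rfl fun k _ => ?_
          rw [smul_eq_mul]
          field_simp

/-! ### Matrix spectral helper lemmas -/

section SpectralHelpers
variable {A : Matrix n n ℂ}

lemma real_smul_vec (x : ℝ) (w : n → ℂ) : x • w = (x : ℂ) • w := by
  funext m; simp [Complex.real_smul]

lemma sum_mulVec' {v : ℕ} (P : Fin v → Matrix n n ℂ) (w : n → ℂ) :
    (∑ k, P k) *ᵥ w = ∑ k, P k *ᵥ w := by
  ext m
  simp [mulVec, dotProduct, Matrix.sum_apply, Finset.sum_mul, Finset.sum_apply]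
  exact Finset.sum_comm

lemma dotProduct_sum' {v : ℕ} (w : n → ℂ) (u : Fin v → n → ℂ) :
    w ⬝ᵥ (∑ i, u i) = ∑ i, w ⬝ᵥ u i := by
  simp only [dotProduct, Finset.sum_apply, Finset.mul_sum]
  exact Finset.sum_comm

lemma cfc_mulVec_eig (hA : A.IsHermitian) (f : ℝ → ℝ) (j : n) :
    (hA.cfc f) *ᵥ ⇑(hA.eigenvectorBasis j)
      = (f (hA.eigenvalues j) : ℂ) • ⇑(hA.eigenvectorBasis j) := by
  rw [Matrix.IsHermitian.cfc, Unitary.conjStarAlgAut_apply, ← mulVec_mulVec, ← mulVec_mulVec,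
    IsHermitian.star_eigenvectorUnitary_mulVec, Matrix.diagonal_mulVec_single]
  have : Pi.single (M := fun _ : n => ℂ) j ((RCLike.ofReal ∘ f ∘ hA.eigenvalues) j * 1)
      = (f (hA.eigenvalues j) : ℂ) • Pi.single (M := fun _ : n => ℂ) j 1 := by
    rw [← Pi.single_smul]
    simp
  rw [this, mulVec_smul, IsHermitian.eigenvectorUnitary_mulVec]

lemma mul_eigCol (M : Matrix n n ℂ) (hA : A.IsHermitian) (j : n) (i : n) :
    (M * (hA.eigenvectorUnitary : Matrix n n ℂ)) i j = (M *ᵥ ⇑(hA.eigenvectorBasis j)) i := by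
  simp [mul_apply, mulVec, dotProduct, IsHermitian.eigenvectorUnitary_apply]

lemma eq_of_mulVec_eig (hA : A.IsHermitian) {M₁ M₂ : Matrix n n ℂ}
    (h : ∀ j, M₁ *ᵥ ⇑(hA.eigenvectorBasis j) = M₂ *ᵥ ⇑(hA.eigenvectorBasis j)) : M₁ = M₂ := by
  have hU : M₁ * (hA.eigenvectorUnitary : Matrix n n ℂ)
      = M₂ * (hA.eigenvectorUnitary : Matrix n n ℂ) := by
    ext i j
    rw [mul_eigCol M₁ hA, mul_eigCol M₂ hA, h j]
  have h2 := congrArg (· * star (hA.eigenvectorUnitary : Matrix n n ℂ)) hU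
  simpa [mul_assoc, Unitary.mul_star_self_of_mem] using h2

lemma trace_diag_mul (d : n → ℂ) (M : Matrix n n ℂ) :
    (diagonal d * M).trace = ∑ j, d j * M j j := by
  simp [trace, mul_apply, diagonal, diag]

lemma trace_cfc_mul (hA : A.IsHermitian) (f : ℝ → ℝ) (T : Matrix n n ℂ) :
    (hA.cfc f * T).trace
      = ∑ j, (f (hA.eigenvalues j) : ℂ) *
          (star ⇑(hA.eigenvectorBasis j) ⬝ᵥ (T *ᵥ ⇑(hA.eigenvectorBasis j))) := by
  set U := (hA.eigenvectorUnitary : Matrix n n ℂ) with hUdef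
  set D := diagonal (RCLike.ofReal ∘ f ∘ hA.eigenvalues : n → ℂ) with hDdef
  have h1 : hA.cfc f * T = U * D * (star U * T) := by
    rw [Matrix.IsHermitian.cfc, Unitary.conjStarAlgAut_apply, mul_assoc]
  rw [h1, trace_mul_cycle, trace_mul_comm, trace_diag_mul]
  refine Finset.sum_congr rfl fun j _ => ?_
  congr 1
  simp only [mul_apply, mulVec, dotProduct, star_apply, Finset.mul_sum, Finset.sum_mul]
  rw [Finset.sum_comm]
  refine Finset.sum_congr rfl fun p _ => Finset.sum_congr rfl fun q _ => ?_
  simp [hUdef, IsHermitian.eigenvectorUnitary_apply, star_apply]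
  ring

lemma eig_norm_one (hA : A.IsHermitian) (j : n) :
    star ⇑(hA.eigenvectorBasis j) ⬝ᵥ ⇑(hA.eigenvectorBasis j) = 1 := by
  have h := Unitary.star_mul_self_of_mem (hA.eigenvectorUnitary).2
  have h2 := congrFun (congrFun (congrArg (fun M : Matrix n n ℂ => (M : Matrix n n ℂ)) h) j) j
  simp only [mul_apply, one_apply_eq] at h2
  rw [← h2]
  simp [dotProduct, star_apply, IsHermitian.eigenvectorUnitary_apply, star_eq_conjTranspose,
    conjTranspose_apply, mul_comm]

lemma trace_cfc' (hA : A.IsHermitian) (f : ℝ → ℝ) :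
    (hA.cfc f).trace = ∑ j, (f (hA.eigenvalues j) : ℂ) := by
  have h := trace_cfc_mul hA f 1
  rw [mul_one] at h
  rw [h]
  refine Finset.sum_congr rfl fun j _ => ?_
  rw [one_mulVec, eig_norm_one hA j, mul_one]

lemma trace_eq_sum_eig (hA : A.IsHermitian) :
    A.trace = ∑ j, (hA.eigenvalues j : ℂ) := by
  conv_lhs => rw [hA.spectral_theorem, Unitary.conjStarAlgAut_apply]
  rw [trace_mul_cycle, Unitary.star_mul_self_of_mem (hA.eigenvectorUnitary).2, one_mul,
    trace_diagonal]
  rfl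

lemma conj_diag_dot (W : Matrix n n ℂ) (d : n → ℂ) (z : n → ℂ) :
    star z ⬝ᵥ ((W * diagonal d * star W) *ᵥ z)
      = ∑ k, d k * (Complex.normSq ((star W *ᵥ z) k) : ℂ) := by
  set y := star W *ᵥ z with hy
  have h1 : (W * diagonal d * star W) *ᵥ z = W *ᵥ (diagonal d *ᵥ y) := by
    rw [hy, mulVec_mulVec, mulVec_mulVec, mul_assoc]
  have h2 : star z ᵥ* W = star y := by
    rw [hy, star_mulVec, star_eq_conjTranspose, conjTranspose_conjTranspose]
  rw [h1, dotProduct_mulVec, h2]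
  simp only [dotProduct, mulVec_diagonal]
  refine Finset.sum_congr rfl fun k _ => ?_
  rw [show (star y) k = (starRingEnd ℂ) (y k) from rfl,
    show (starRingEnd ℂ) (y k) * (d k * y k) = d k * ((y k) * (starRingEnd ℂ) (y k)) from by ring,
    Complex.mul_conj]

lemma spectral_dot (hA : A.IsHermitian) (z : n → ℂ) :
    star z ⬝ᵥ (A *ᵥ z)
      = ∑ k, (hA.eigenvalues k : ℂ) *
          (Complex.normSq ((star (hA.eigenvectorUnitary : Matrix n n ℂ) *ᵥ z) k) : ℂ) := by
  conv_lhs => rw [hA.spectral_theorem, Unitary.conjStarAlgAut_apply]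
  rw [conj_diag_dot]
  rfl

lemma parseval (hA : A.IsHermitian) (z : n → ℂ) :
    star z ⬝ᵥ z
      = ∑ k, (Complex.normSq ((star (hA.eigenvectorUnitary : Matrix n n ℂ) *ᵥ z) k) : ℂ) := by
  have h := conj_diag_dot (hA.eigenvectorUnitary : Matrix n n ℂ) (fun _ => 1) z
  rw [diagonal_one, mul_one, Unitary.mul_star_self_of_mem (hA.eigenvectorUnitary).2] at h
  simpa using h

lemma row_normSq (M : Matrix n n ℂ) (k : n) :
    ∑ j, (Complex.normSq (M k j) : ℂ) = (M * Mᴴ) k k := by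
  simp [mul_apply, conjTranspose_apply, Complex.mul_conj]

end SpectralHelpers

section ProjHelpers
variable {v : ℕ} {P : Fin v → Matrix n n ℂ} {l : Fin v → ℝ}
  (hPproj : ∀ i, P i * P i = P i)
  (hPorth : ∀ i j, i ≠ j → P i * P j = 0)
  (hPsum : ∑ i, P i = (1 : Matrix n n ℂ))
  (hl_distinct : Function.Injective l)
  {σ : Matrix n n ℂ} (hσ : σ.IsHermitian) (hσdef : σ = ∑ i, (l i : ℂ) • P i)

include hPproj hPorth hσdef in
lemma proj_mul_sigma (i : Fin v) : P i * σ = (l i : ℂ) • P i := by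
  rw [hσdef, Finset.mul_sum]
  rw [Finset.sum_eq_single i]
  · rw [mul_smul_comm, hPproj]
  · intro k _ hk
    rw [mul_smul_comm, hPorth i k (Ne.symm hk), smul_zero]
  · simp

include hPproj hPorth hl_distinct hσdef in
lemma proj_mulVec_eig (hPsum' : ∑ i, P i = (1 : Matrix n n ℂ)) (i : Fin v) (j : n) :
    P i *ᵥ ⇑(hσ.eigenvectorBasis j)
      = if l i = hσ.eigenvalues j then ⇑(hσ.eigenvectorBasis j) else 0 := by
  set w := ⇑(hσ.eigenvectorBasis j) with hw
  have key : ∀ k : Fin v, l k ≠ hσ.eigenvalues j → P k *ᵥ w = 0 := by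
    intro k hk
    have h1 : P k *ᵥ (σ *ᵥ w) = (l k : ℂ) • (P k *ᵥ w) := by
      rw [mulVec_mulVec, proj_mul_sigma hPproj hPorth hσdef, smul_mulVec]
    rw [hσ.mulVec_eigenvectorBasis, mulVec_smul, real_smul_vec] at h1
    have h2 : ((l k : ℂ) - (hσ.eigenvalues j : ℂ)) • (P k *ᵥ w) = 0 := by
      rw [sub_smul, h1, sub_self]
    rcases smul_eq_zero.mp h2 with h | h
    · exact absurd (by exact_mod_cast sub_eq_zero.mp h) hk
    · exact h
  by_cases hi : l i = hσ.eigenvalues j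
  · rw [if_pos hi]
    calc P i *ᵥ w = ∑ k, P k *ᵥ w := by
          refine (Finset.sum_eq_single_of_mem (f := fun k => P k *ᵥ w) i (Finset.mem_univ i)
            fun k _ hk => ?_).symm
          exact key k (fun h => hk (hl_distinct (h.trans hi.symm)))
      _ = w := by rw [← sum_mulVec', hPsum', one_mulVec]
  · rw [if_neg hi]
    exact key i hi

include hPproj hPorth hPsum hl_distinct hσdef in
lemma cfc_mul_proj (g : ℝ → ℝ) (i : Fin v) :
    hσ.cfc g * P i = (g (l i) : ℂ) • P i := by
  apply eq_of_mulVec_eig hσ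
  intro j
  have hz := proj_mulVec_eig hPproj hPorth hl_distinct hσ hσdef hPsum i j
  rw [← mulVec_mulVec, smul_mulVec, hz]
  by_cases hi : l i = hσ.eigenvalues j
  · rw [if_pos hi, cfc_mulVec_eig hσ g j, hi]
  · rw [if_neg hi, mulVec_zero, smul_zero]

end ProjHelpers
theorem pinching_data_processing_sandwiched_renyi
    {v : ℕ} (P : Fin v → Matrix n n ℂ) (l : Fin v → ℝ)
    (hPherm : ∀ i, (P i).IsHermitian)
    (hPproj : ∀ i, P i * P i = P i)
    (hPorth : ∀ i j, i ≠ j → P i * P j = 0)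
    (hPsum : ∑ i, P i = (1 : Matrix n n ℂ))
    (hl_distinct : Function.Injective l)
    (hl_nonneg : ∀ i, 0 ≤ l i)
    (σ : Matrix n n ℂ) (hσ : σ.PosSemidef) (hσdef : σ = ∑ i, (l i : ℂ) • P i)
    (hσtr : σ.trace = 1)
    (ρ : Matrix n n ℂ) (hρ : ρ.PosSemidef) (hρtr : ρ.trace = 1)
    (hsupp : ∀ i, l i = 0 → P i * ρ = 0)
    (α : ℝ) (hα0 : 0 < α) (hα1 : α ≤ 1) :
    (1 / α) * Real.logb 2
      ((((pinchHerm P hPherm hρ.1).cfc (fun t => if t ≤ 0 then 0 else t ^ (1 + α))) *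
        (∑ i, ((if l i = 0 then 0 else (l i) ^ (-α) : ℝ) : ℂ) • P i)).trace.re)
      ≤ sandRenyi α ρ σ hρ.1 hσ.1 := by
  unfold sandRenyi
  rw [show (fun t : ℝ => if t ≤ 0 then 0 else t ^ (1 + α)) = fpow α from rfl]
  rw [show (∑ i, ((if l i = 0 then 0 else (l i) ^ (-α) : ℝ) : ℂ) • P i)
        = ∑ i, ((tpow α (l i) : ℝ) : ℂ) • P i from rfl]
  set hB := pinchHerm P hPherm hρ.1 with hBdef
  set hX := sandwichHerm hρ.1 hσ.1 (-(α / (2 * (1 + α)))) with hXdef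
  set T : Matrix n n ℂ := ∑ i, ((tpow α (l i) : ℝ) : ℂ) • P i with hTdef
  set M : Matrix n n ℂ := mpow hσ.1 (-(α / (2 * (1 + α)))) with hMdef
  set c : Fin v → ℝ := fun i => gpow α (l i) with hcdef
  set w : n → n → ℂ := fun j => ⇑(hB.eigenvectorBasis j) with hwdef
  set μ : n → ℝ := hB.eigenvalues with hμdef
  set lam : n → ℝ := hX.eigenvalues with hlamdef
  set z : Fin v → n → n → ℂ := fun i j => P i *ᵥ w j with hzdef
  set a : n → Fin v → n → ℝ := fun k i j =>
    Complex.normSq ((star (hX.eigenvectorUnitary : Matrix n n ℂ) *ᵥ z i j) k) with hadef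
  set Q : Fin v → n → ℝ := fun i j => ∑ k, a k i j with hQdef
  -- PSD facts
  have hmσH : M.IsHermitian := cfcHerm hσ.1 _
  have hXpsd : (M * ρ * M).PosSemidef := by
    have h := hρ.conjTranspose_mul_mul_same (B := M)
    rwa [hmσH.eq] at h
  have hBpsd : (∑ i, P i * ρ * P i).PosSemidef := by
    refine Finset.sum_induction _ _ (fun x y hx hy => hx.add hy) ?_ (fun i _ => ?_)
    · exact Matrix.PosSemidef.zero
    · have h := hρ.conjTranspose_mul_mul_same (B := P i)
      rwa [(hPherm i).eq] at h
  have hμ0 : ∀ j, 0 ≤ μ j := fun j => hBpsd.eigenvalues_nonneg j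
  have hlam0 : ∀ k, 0 ≤ lam k := fun k => hXpsd.eigenvalues_nonneg k
  have ha0 : ∀ k i j, 0 ≤ a k i j := fun k i j => Complex.normSq_nonneg _
  have hQ0 : ∀ i j, 0 ≤ Q i j := fun i j => Finset.sum_nonneg fun k _ => ha0 k i j
  -- commutation of M with the projections
  have hmP : ∀ i, M * P i = ((c i : ℝ) : ℂ) • P i := fun i =>
    cfc_mul_proj hPproj hPorth hPsum hl_distinct hσ.1 hσdef (gpow α) i
  have hPm : ∀ i, P i * M = ((c i : ℝ) : ℂ) • P i := by
    intro i
    have h := congrArg conjTranspose (hmP i)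
    simpa [conjTranspose_mul, conjTranspose_smul, hmσH.eq, (hPherm i).eq,
      Complex.star_def, Complex.conj_ofReal] using h
  have hPXP : ∀ i, P i * ((M * ρ * M) * P i) = (((c i : ℝ) : ℂ)) ^ 2 • (P i * ρ * P i) := by
    intro i
    have h1 : P i * ((M * ρ * M) * P i) = (P i * M) * ρ * (M * P i) := by
      simp only [mul_assoc]
    rw [h1, hPm i, hmP i, smul_mul_assoc, smul_mul_assoc, mul_smul_comm, smul_smul, sq]
  have hPB : ∀ i, P i * (∑ m, P m * ρ * P m) = P i * ρ * P i := by
    intro i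
    rw [Finset.mul_sum, Finset.sum_eq_single i]
    · simp only [← mul_assoc, hPproj i]
    · intro m _ hm
      have h2 : P i * (P m * ρ * P m) = (P i * P m) * (ρ * P m) := by simp only [mul_assoc]
      rw [h2, hPorth i m (Ne.symm hm), zero_mul]
    · simp
  have hBw : ∀ j, (∑ m, P m * ρ * P m) *ᵥ w j = ((μ j : ℝ) : ℂ) • w j := by
    intro j
    have h := hB.mulVec_eigenvectorBasis j
    rw [real_smul_vec] at h
    exact h
  have hsz : ∀ i j, star (z i j) = star (w j) ᵥ* P i := by
    intro i j
    have h : star (P i *ᵥ w j) = star (w j) ᵥ* (P i)ᴴ := star_mulVec _ _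
    rw [(hPherm i).eq] at h
    exact h
  have hQc : ∀ i j, star (w j) ⬝ᵥ (z i j) = ((Q i j : ℝ) : ℂ) := by
    intro i j
    have h1 : star (z i j) ⬝ᵥ (z i j) = star (w j) ⬝ᵥ (z i j) := by
      rw [hsz i j]
      have h2 : (star (w j) ᵥ* P i) ⬝ᵥ (z i j) = star (w j) ⬝ᵥ (P i *ᵥ (z i j)) :=
        (dotProduct_mulVec _ _ _).symm
      rw [h2]
      have h3 : P i *ᵥ z i j = z i j := by
        show P i *ᵥ (P i *ᵥ w j) = z i j
        rw [mulVec_mulVec, hPproj i]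
      rw [h3]
    have h4 := parseval hX (z i j)
    rw [← h1, h4]
    simp only [hQdef, hadef]
    push_cast
    rfl
  -- trace computations
  have hLC : (hB.cfc (fpow α) * T).trace
      = ((∑ j, fpow α (μ j) * (∑ i, tpow α (l i) * Q i j) : ℝ) : ℂ) := by
    rw [trace_cfc_mul hB (fpow α) T]
    have hTw : ∀ j, T *ᵥ w j = ∑ i, ((tpow α (l i) : ℝ) : ℂ) • z i j := by
      intro j
      rw [hTdef, sum_mulVec']
      exact Finset.sum_congr rfl fun i _ => smul_mulVec _ _ _
    calc ∑ j, (fpow α (hB.eigenvalues j) : ℂ) *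
            (star ⇑(hB.eigenvectorBasis j) ⬝ᵥ (T *ᵥ ⇑(hB.eigenvectorBasis j)))
        = ∑ j, (fpow α (μ j) : ℂ) * ((∑ i, tpow α (l i) * Q i j : ℝ) : ℂ) := by
          refine Finset.sum_congr rfl fun j _ => ?_
          congr 1
          calc star ⇑(hB.eigenvectorBasis j) ⬝ᵥ (T *ᵥ ⇑(hB.eigenvectorBasis j))
              = star (w j) ⬝ᵥ (T *ᵥ w j) := rfl
            _ = star (w j) ⬝ᵥ (∑ i, ((tpow α (l i) : ℝ) : ℂ) • z i j) := by rw [hTw j]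
            _ = ∑ i, star (w j) ⬝ᵥ (((tpow α (l i) : ℝ) : ℂ) • z i j) := dotProduct_sum' _ _
            _ = ∑ i, ((tpow α (l i) : ℝ) : ℂ) * ((Q i j : ℝ) : ℂ) := by
                refine Finset.sum_congr rfl fun i _ => ?_
                rw [dotProduct_smul, smul_eq_mul, hQc i j]
            _ = ((∑ i, tpow α (l i) * Q i j : ℝ) : ℂ) := by push_cast; rfl
      _ = ((∑ j, fpow α (μ j) * (∑ i, tpow α (l i) * Q i j) : ℝ) : ℂ) := by push_cast; rfl
  have hLre : ((hB.cfc (fpow α) * T).trace).re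
      = ∑ j, fpow α (μ j) * (∑ i, tpow α (l i) * Q i j) := by
    rw [hLC, Complex.ofReal_re]
  have hRC : ((hX.cfc (fpow α)).trace) = ((∑ k, fpow α (lam k) : ℝ) : ℂ) := by
    rw [trace_cfc' hX (fpow α)]
    push_cast
    rfl
  have hRre : ((hX.cfc (fpow α)).trace).re = ∑ k, fpow α (lam k) := by
    rw [hRC, Complex.ofReal_re]
  -- key spectral identity
  have hXz : ∀ i j, star (z i j) ⬝ᵥ ((M * ρ * M) *ᵥ z i j)
      = (((c i) ^ 2 * μ j * Q i j : ℝ) : ℂ) := by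
    intro i j
    calc star (z i j) ⬝ᵥ ((M * ρ * M) *ᵥ z i j)
        = (star (w j) ᵥ* P i) ⬝ᵥ ((M * ρ * M) *ᵥ z i j) := by rw [hsz i j]
      _ = star (w j) ⬝ᵥ ((P i * ((M * ρ * M) * P i)) *ᵥ w j) := by
          rw [← dotProduct_mulVec]
          rw [show (M * ρ * M) *ᵥ z i j = ((M * ρ * M) * P i) *ᵥ w j from by
                show (M * ρ * M) *ᵥ (P i *ᵥ w j) = _
                rw [mulVec_mulVec]]
          rw [mulVec_mulVec]
      _ = (((c i : ℝ) : ℂ)) ^ 2 * (star (w j) ⬝ᵥ ((P i * ρ * P i) *ᵥ w j)) := by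
          rw [hPXP i, smul_mulVec, dotProduct_smul, smul_eq_mul]
      _ = (((c i : ℝ) : ℂ)) ^ 2 * (((μ j : ℝ) : ℂ) * ((Q i j : ℝ) : ℂ)) := by
          congr 1
          rw [← hPB i, ← mulVec_mulVec, hBw j, mulVec_smul, dotProduct_smul, smul_eq_mul,
            show P i *ᵥ w j = z i j from rfl, hQc i j]
      _ = (((c i) ^ 2 * μ j * Q i j : ℝ) : ℂ) := by push_cast; ring
  have hkey : ∀ i j, ∑ k, lam k * a k i j = (c i) ^ 2 * μ j * Q i j := by
    intro i j
    have h1 := spectral_dot hX (z i j)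
    rw [hXz i j] at h1
    have h2 : ((∑ k, lam k * a k i j : ℝ) : ℂ) = (((c i) ^ 2 * μ j * Q i j : ℝ) : ℂ) := by
      calc ((∑ k, lam k * a k i j : ℝ) : ℂ)
          = ∑ k, (hX.eigenvalues k : ℂ) *
              (Complex.normSq ((star (hX.eigenvectorUnitary : Matrix n n ℂ) *ᵥ z i j) k) : ℂ) := by
            push_cast
            rfl
        _ = (((c i) ^ 2 * μ j * Q i j : ℝ) : ℂ) := h1.symm
    exact_mod_cast h2
  -- total weights sum to one
  have hs1 : ∀ k, ∑ j, ∑ i, a k i j = 1 := by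
    intro k
    have ha_entry : ∀ i j, a k i j = Complex.normSq
        (((star (hX.eigenvectorUnitary : Matrix n n ℂ) * P i) *
          (hB.eigenvectorUnitary : Matrix n n ℂ)) k j) := by
      intro i j
      refine congrArg Complex.normSq ?_
      show (star (hX.eigenvectorUnitary : Matrix n n ℂ) *ᵥ (P i *ᵥ w j)) k = _
      rw [mulVec_mulVec]
      exact (mul_eigCol (star (hX.eigenvectorUnitary : Matrix n n ℂ) * P i) hB j k).symm
    have hNN : ∀ i : Fin v,
        ((star (hX.eigenvectorUnitary : Matrix n n ℂ) * P i) *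
          (hB.eigenvectorUnitary : Matrix n n ℂ)) *
        ((star (hX.eigenvectorUnitary : Matrix n n ℂ) * P i) *
          (hB.eigenvectorUnitary : Matrix n n ℂ))ᴴ
        = star (hX.eigenvectorUnitary : Matrix n n ℂ) * P i *
            (hX.eigenvectorUnitary : Matrix n n ℂ) := by
      intro i
      rw [conjTranspose_mul, conjTranspose_mul]
      rw [show ((star (hX.eigenvectorUnitary : Matrix n n ℂ))ᴴ : Matrix n n ℂ)
            = (hX.eigenvectorUnitary : Matrix n n ℂ) from by
          rw [← star_eq_conjTranspose, star_star]]
      rw [(hPherm i).eq]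
      have hWW : (hB.eigenvectorUnitary : Matrix n n ℂ) *
          ((hB.eigenvectorUnitary : Matrix n n ℂ))ᴴ = 1 := by
        rw [← star_eq_conjTranspose]
        exact Unitary.mul_star_self_of_mem (hB.eigenvectorUnitary).2
      calc (star (hX.eigenvectorUnitary : Matrix n n ℂ) * P i *
              (hB.eigenvectorUnitary : Matrix n n ℂ)) *
            (((hB.eigenvectorUnitary : Matrix n n ℂ))ᴴ *
              (P i * (hX.eigenvectorUnitary : Matrix n n ℂ)))
          = star (hX.eigenvectorUnitary : Matrix n n ℂ) * (P i *
              (((hB.eigenvectorUnitary : Matrix n n ℂ) *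
                ((hB.eigenvectorUnitary : Matrix n n ℂ))ᴴ) *
              (P i * (hX.eigenvectorUnitary : Matrix n n ℂ)))) := by
            simp only [mul_assoc]
        _ = star (hX.eigenvectorUnitary : Matrix n n ℂ) * P i *
              (hX.eigenvectorUnitary : Matrix n n ℂ) := by
            rw [hWW, one_mul]
            rw [show P i * (P i * (hX.eigenvectorUnitary : Matrix n n ℂ))
                  = (P i * P i) * (hX.eigenvectorUnitary : Matrix n n ℂ) from by
                simp only [mul_assoc]]
            rw [hPproj i]
            simp only [mul_assoc]
    have hC : ((∑ j, ∑ i, a k i j : ℝ) : ℂ) = 1 := by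
      push_cast
      calc ∑ j, ∑ i, (a k i j : ℂ)
          = ∑ i, ∑ j, (a k i j : ℂ) := Finset.sum_comm
        _ = ∑ i, (star (hX.eigenvectorUnitary : Matrix n n ℂ) * P i *
              (hX.eigenvectorUnitary : Matrix n n ℂ)) k k := by
            refine Finset.sum_congr rfl fun i _ => ?_
            rw [Finset.sum_congr rfl fun j _ => by rw [ha_entry i j]]
            rw [row_normSq, hNN i]
        _ = (∑ i, star (hX.eigenvectorUnitary : Matrix n n ℂ) * P i *
              (hX.eigenvectorUnitary : Matrix n n ℂ)) k k := by
            rw [Matrix.sum_apply]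
        _ = 1 := by
            have hsum2 : ∑ i, star (hX.eigenvectorUnitary : Matrix n n ℂ) * P i *
                (hX.eigenvectorUnitary : Matrix n n ℂ)
                = star (hX.eigenvectorUnitary : Matrix n n ℂ) *
                  (hX.eigenvectorUnitary : Matrix n n ℂ) := by
              have he : ∀ i : Fin v, star (hX.eigenvectorUnitary : Matrix n n ℂ) * P i *
                  (hX.eigenvectorUnitary : Matrix n n ℂ)
                  = star (hX.eigenvectorUnitary : Matrix n n ℂ) *
                    (P i * (hX.eigenvectorUnitary : Matrix n n ℂ)) := fun i => by
                simp only [mul_assoc]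
              rw [Finset.sum_congr rfl fun i _ => he i, ← Finset.mul_sum, ← Finset.sum_mul,
                hPsum, one_mul]
            rw [hsum2, Unitary.star_mul_self_of_mem (hX.eigenvectorUnitary).2, one_apply_eq]
    exact_mod_cast hC
  -- column sums
  have hQsum : ∀ j, ∑ i, Q i j = 1 := by
    intro j
    have h1 : ∑ i, ((Q i j : ℝ) : ℂ) = 1 := by
      rw [Finset.sum_congr rfl fun i _ => (hQc i j).symm]
      rw [← dotProduct_sum']
      rw [show (∑ i, z i j) = (∑ i, P i) *ᵥ w j from (sum_mulVec' P (w j)).symm]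
      rw [hPsum, one_mulVec]
      exact eig_norm_one hB j
    exact_mod_cast h1
  have hQz : ∀ i j, l i = 0 → μ j ≠ 0 → Q i j = 0 := by
    intro i j hli hμj
    have hzij : z i j = 0 := by
      have hPBz : P i * (∑ m, P m * ρ * P m) = 0 := by
        rw [hPB i, show P i * ρ * P i = (P i * ρ) * P i from rfl, hsupp i hli, zero_mul]
      have h1 : ((μ j : ℝ) : ℂ) • z i j = 0 := by
        show ((μ j : ℝ) : ℂ) • (P i *ᵥ w j) = 0
        rw [← mulVec_smul, ← hBw j, mulVec_mulVec, hPBz, zero_mulVec]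
      rcases smul_eq_zero.mp h1 with h | h
      · exact absurd (by exact_mod_cast h) hμj
      · exact h
    show (∑ k, a k i j) = 0
    refine Finset.sum_eq_zero fun k _ => ?_
    show Complex.normSq ((star (hX.eigenvectorUnitary : Matrix n n ℂ) *ᵥ z i j) k) = 0
    rw [hzij, mulVec_zero]
    simp
  -- trace of B is one
  have hμsum : ∑ j, μ j = 1 := by
    have h1 : (∑ m, P m * ρ * P m).trace = 1 := by
      rw [trace_sum]
      have h2 : ∀ i : Fin v, (P i * ρ * P i).trace = (P i * ρ).trace := by
        intro i
        rw [trace_mul_cycle, hPproj i]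
      rw [Finset.sum_congr rfl fun i _ => h2 i, ← trace_sum, ← Finset.sum_mul, hPsum, one_mul,
        hρtr]
    have h3 := trace_eq_sum_eig hB
    rw [h1] at h3
    have h4 : ((∑ j, μ j : ℝ) : ℂ) = ((1 : ℝ) : ℂ) := by
      calc ((∑ j, μ j : ℝ) : ℂ) = ∑ j, (hB.eigenvalues j : ℂ) := by push_cast; rfl
        _ = ((1 : ℝ) : ℂ) := by rw [← h3, Complex.ofReal_one]
    exact_mod_cast h4
  -- positivity of LHS
  have hτ0 : ∀ j, 0 ≤ ∑ i, tpow α (l i) * Q i j := fun j =>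
    Finset.sum_nonneg fun i _ => mul_nonneg (tpow_nonneg (hl_nonneg i)) (hQ0 i j)
  have hterm0 : ∀ j, 0 ≤ fpow α (μ j) * ∑ i, tpow α (l i) * Q i j := fun j =>
    mul_nonneg (fpow_nonneg α _) (hτ0 j)
  obtain ⟨j₀, hj₀⟩ : ∃ j, 0 < μ j := by
    by_contra h
    push_neg at h
    have hall : ∀ j, μ j = 0 := fun j => le_antisymm (h j) (hμ0 j)
    rw [Finset.sum_congr rfl fun j _ => hall j] at hμsum
    simp at hμsum
  have hτpos : 0 < ∑ i, tpow α (l i) * Q i j₀ := by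
    rcases eq_or_lt_of_le (hτ0 j₀) with h0 | h0
    · exfalso
      have hz0 : ∀ i ∈ Finset.univ, tpow α (l i) * Q i j₀ = 0 :=
        (Finset.sum_eq_zero_iff_of_nonneg
          (fun i _ => mul_nonneg (tpow_nonneg (hl_nonneg i)) (hQ0 i j₀))).mp h0.symm
      have hQall : ∀ i, Q i j₀ = 0 := by
        intro i
        by_cases hli : l i = 0
        · exact hQz i j₀ hli (ne_of_gt hj₀)
        · have hlpos : 0 < l i := lt_of_le_of_ne (hl_nonneg i) (Ne.symm hli)
          have htpos : 0 < tpow α (l i) := by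
            unfold tpow
            rw [if_neg hli]
            exact Real.rpow_pos_of_pos hlpos _
          rcases mul_eq_zero.mp (hz0 i (Finset.mem_univ i)) with h | h
          · exact absurd h (ne_of_gt htpos)
          · exact h
      have := hQsum j₀
      rw [Finset.sum_congr rfl fun i _ => hQall i] at this
      simp at this
    · exact h0
  have hpos : 0 < ∑ j, fpow α (μ j) * ∑ i, tpow α (l i) * Q i j := by
    refine Finset.sum_pos' (fun j _ => hterm0 j) ⟨j₀, Finset.mem_univ j₀, ?_⟩
    exact mul_pos (fpow_pos hj₀) hτpos
  -- the main bound
  have hle : ∑ j, fpow α (μ j) * ∑ i, tpow α (l i) * Q i j ≤ ∑ k, fpow α (lam k) := by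
    have step1 : ∀ j, fpow α (μ j) * ∑ i, tpow α (l i) * Q i j
        = ∑ i, fpow α ((c i) ^ 2 * μ j) * Q i j := by
      intro j
      rw [Finset.mul_sum]
      refine Finset.sum_congr rfl fun i _ => ?_
      rw [← mul_assoc, fp_scale hα0 (hl_nonneg i) (hμ0 j)]
    have step2 : ∀ i j, fpow α ((c i) ^ 2 * μ j) * Q i j ≤ ∑ k, fpow α (lam k) * a k i j := by
      intro i j
      have hcc : ((c i) ^ 2 * μ j) * (∑ k, a k i j) = ∑ k, lam k * a k i j := by
        rw [hkey i j]
      have hj := jensen_fp hα0 (fun k => a k i j) lam (fun k => ha0 k i j) hlam0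
        ((c i) ^ 2 * μ j) (mul_nonneg (sq_nonneg _) (hμ0 j)) hcc
      exact hj
    calc ∑ j, fpow α (μ j) * ∑ i, tpow α (l i) * Q i j
        = ∑ j, ∑ i, fpow α ((c i) ^ 2 * μ j) * Q i j := Finset.sum_congr rfl fun j _ => step1 j
      _ ≤ ∑ j, ∑ i, ∑ k, fpow α (lam k) * a k i j :=
          Finset.sum_le_sum fun j _ => Finset.sum_le_sum fun i _ => step2 i j
      _ = ∑ k, ∑ j, ∑ i, fpow α (lam k) * a k i j := by
          rw [show (∑ j, ∑ i, ∑ k, fpow α (lam k) * a k i j)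
                = ∑ j, ∑ k, ∑ i, fpow α (lam k) * a k i j from
              Finset.sum_congr rfl fun j _ => Finset.sum_comm]
          exact Finset.sum_comm
      _ = ∑ k, fpow α (lam k) * ∑ j, ∑ i, a k i j := by
          simp only [← Finset.mul_sum]
      _ = ∑ k, fpow α (lam k) := by
          refine Finset.sum_congr rfl fun k _ => ?_
          rw [hs1 k, mul_one]
  rw [hLre, hRre]
  exact mul_le_mul_of_nonneg_left (Real.logb_le_logb_of_le one_lt_two hpos hle)
    (by positivity)
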